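/- If G is a graph on 2n vertices with a perfect matching whose matching polynomial has no zero in the open interval (0,1), then G is a disjoint union of n copies of K_2 (i.e., E(G) is itself a perfect matching). -/

import Mathlib

open Polynomial Finset

/-- `p(G,r)`: the number of `r`-matchings of `G`, i.e. sets of `r` pairwise
non-incident edges. -/
noncomputable def matchCount {V : Type*} [Fintype V] [DecidableEq V]
    (G : SimpleGraph V) (r : ℕ) : ℕ :=
  Set.ncard {s : Finset (Sym2 V) | ↑s ⊆ G.edgeSet ∧ s.card = r ∧
    ∀ e ∈ s, ∀ f ∈ s, e ≠ f → ∀ v : V, ¬(v ∈ e ∧ v ∈ f)}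

/-- The matching polynomial `μ(G,x) = Σ_r (-1)^r p(G,r) x^(n-2r)`. -/
noncomputable def matchPoly {V : Type*} [Fintype V] [DecidableEq V]
    (G : SimpleGraph V) : Polynomial ℝ :=
  ∑ r ∈ Finset.range (Fintype.card V / 2 + 1),
    Polynomial.C ((-1 : ℝ) ^ r * (matchCount G r : ℝ)) *
      Polynomial.X ^ (Fintype.card V - 2 * r)

namespace MP

open scoped Classical
set_option linter.unusedSectionVars false

variable {V : Type*} [Fintype V] [DecidableEq V] (G : SimpleGraph V)

/-- `s` is a matching using only vertices in `A`. -/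
def IsM (A : Finset V) (s : Finset (Sym2 V)) : Prop :=
  ↑s ⊆ G.edgeSet ∧ (∀ e ∈ s, ∀ v ∈ e, v ∈ A) ∧
    ∀ e ∈ s, ∀ f ∈ s, e ≠ f → ∀ v : V, ¬(v ∈ e ∧ v ∈ f)

noncomputable def mset (A : Finset V) (r : ℕ) : Finset (Finset (Sym2 V)) :=
  Finset.univ.filter (fun s => IsM G A s ∧ s.card = r)

noncomputable def pm (A : Finset V) (r : ℕ) : ℕ := (mset G A r).card

lemma mem_mset {A : Finset V} {r : ℕ} {s : Finset (Sym2 V)} :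
    s ∈ mset G A r ↔ IsM G A s ∧ s.card = r := by
  simp [mset]

lemma pm_zero (A : Finset V) : pm G A 0 = 1 := by
  have : mset G A 0 = {∅} := by
    ext s
    simp only [mem_mset, Finset.mem_singleton, Finset.card_eq_zero]
    constructor
    · rintro ⟨-, h⟩; exact h
    · rintro rfl
      refine ⟨⟨?_, ?_, ?_⟩, rfl⟩ <;> simp
  rw [pm, this, Finset.card_singleton]

lemma edge_two {e : Sym2 V} (he : e ∈ G.edgeSet) :
    ∃ a b : V, a ≠ b ∧ e = s(a, b) ∧ G.Adj a b := by
  induction e with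
  | _ a b =>
    exact ⟨a, b, (G.mem_edgeSet.1 he).ne, rfl, G.mem_edgeSet.1 he⟩

lemma filter_mem_pair {a b : V} :
    Finset.univ.filter (fun v => v ∈ s(a, b)) = {a, b} := by
  ext v
  simp [Sym2.mem_iff]

/-- vertices covered by a set of edges -/
noncomputable def cov (s : Finset (Sym2 V)) : Finset V :=
  s.biUnion (fun e => Finset.univ.filter (fun v => v ∈ e))

lemma mem_cov {s : Finset (Sym2 V)} {v : V} :
    v ∈ cov s ↔ ∃ e ∈ s, v ∈ e := by
  simp [cov]

lemma cov_card {A : Finset V} {r : ℕ} {s : Finset (Sym2 V)}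
    (hs : s ∈ mset G A r) : (cov s).card = 2 * r := by
  obtain ⟨⟨hE, _, hdisj⟩, hcard⟩ := (mem_mset G).1 hs
  rw [cov, Finset.card_biUnion]
  · rw [← hcard]
    rw [Finset.sum_congr rfl (fun e he => ?_), Finset.sum_const, smul_eq_mul, mul_comm]
    obtain ⟨a, b, hab, rfl, -⟩ := edge_two G (hE he)
    rw [filter_mem_pair, Finset.card_insert_of_notMem (by simp [hab]), Finset.card_singleton]
  · intro e he f hf hef
    simp only [Finset.disjoint_left, Finset.mem_filter]
    rintro v ⟨-, hv⟩ ⟨-, hv'⟩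
    exact hdisj e he f hf hef v ⟨hv, hv'⟩

lemma cov_subset {A : Finset V} {r : ℕ} {s : Finset (Sym2 V)}
    (hs : s ∈ mset G A r) : cov s ⊆ A := by
  obtain ⟨⟨_, hA, _⟩, _⟩ := (mem_mset G).1 hs
  intro v hv
  obtain ⟨e, he, hve⟩ := (mem_cov).1 hv
  exact hA e he v hve

lemma pm_eq_zero {A : Finset V} {r : ℕ} (h : A.card < 2 * r) : pm G A r = 0 := by
  rw [pm, Finset.card_eq_zero]
  by_contra hne
  obtain ⟨s, hs⟩ := Finset.nonempty_iff_ne_empty.2 hne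
  have h1 := cov_card G hs
  have h2 := Finset.card_le_card (cov_subset G hs)
  omega

lemma matchCount_eq (r : ℕ) : matchCount G r = pm G univ r := by
  rw [matchCount, pm]
  rw [← Set.ncard_coe_finset]
  congr 1
  ext s
  simp only [Finset.coe_filter, mem_mset, Set.mem_setOf_eq, IsM, Finset.mem_coe,
    Finset.mem_univ, true_and, mset, Finset.mem_filter]
  tauto

lemma pm_succ {A : Finset V} {u : V} (hu : u ∈ A) (r : ℕ) :
    pm G A (r + 1) =
      pm G (A.erase u) (r + 1) +
        ∑ v ∈ (A.erase u).filter (G.Adj u), pm G ((A.erase u).erase v) r := by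
  classical
  have hsplit := Finset.card_filter_add_card_filter_not
    (s := mset G A (r+1)) (p := fun s => ∀ e ∈ s, u ∉ e)
  have h1 : (mset G A (r+1)).filter (fun s => ∀ e ∈ s, u ∉ e)
      = mset G (A.erase u) (r+1) := by
    ext s
    simp only [Finset.mem_filter, mem_mset, IsM]
    constructor
    · rintro ⟨⟨⟨hE, hA, hd⟩, hcard⟩, hu'⟩
      exact ⟨⟨hE, fun e he v hv =>
        Finset.mem_erase.2 ⟨fun h => hu' e he (h ▸ hv), hA e he v hv⟩, hd⟩, hcard⟩
    · rintro ⟨⟨hE, hA, hd⟩, hcard⟩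
      refine ⟨⟨⟨hE, fun e he v hv => (Finset.mem_erase.1 (hA e he v hv)).2, hd⟩, hcard⟩, ?_⟩
      intro e he hv
      exact (Finset.mem_erase.1 (hA e he u hv)).1 rfl
  have h2 : (((A.erase u).filter (G.Adj u)).sigma
        (fun v => mset G ((A.erase u).erase v) r)).card
      = ((mset G A (r+1)).filter (fun s => ¬ ∀ e ∈ s, u ∉ e)).card := by
    apply Finset.card_bij (i := fun x _ => insert s(u, x.1) x.2)
    · rintro ⟨v, m⟩ hx
      simp only [Finset.mem_sigma, Finset.mem_filter, Finset.mem_erase, mem_mset, IsM] at hx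
      obtain ⟨⟨⟨hvu, hvA⟩, hadj⟩, ⟨hE, hA, hd⟩, hcard⟩ := hx
      have hnotmem : s(u, v) ∉ m := by
        intro hmem
        have := hA _ hmem u (by simp)
        simp at this
      have hvert : ∀ e ∈ m, ∀ w, w ∈ e → w ≠ u ∧ w ≠ v ∧ w ∈ A := by
        intro e he w hw
        have := hA e he w hw
        exact ⟨this.2.1, this.1, this.2.2⟩
      simp only [Finset.mem_filter, mem_mset, IsM]
      refine ⟨⟨⟨?_, ?_, ?_⟩, ?_⟩, ?_⟩
      · intro e he
        rcases Finset.mem_insert.1 he with rfl | he'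
        · exact G.mem_edgeSet.2 hadj
        · exact hE he'
      · intro e he w hw
        rcases Finset.mem_insert.1 he with rfl | he'
        · rcases Sym2.mem_iff.1 hw with rfl | rfl
          · exact hu
          · exact hvA
        · exact (hvert e he' w hw).2.2
      · intro e he f hf hef w hw
        rcases Finset.mem_insert.1 he with rfl | he' <;>
          rcases Finset.mem_insert.1 hf with rfl | hf'
        · exact absurd rfl hef
        · rcases Sym2.mem_iff.1 hw.1 with rfl | rfl
          · exact (hvert f hf' w hw.2).1 rfl
          · exact (hvert f hf' w hw.2).2.1 rfl
        · rcases Sym2.mem_iff.1 hw.2 with rfl | rfl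
          · exact (hvert e he' w hw.1).1 rfl
          · exact (hvert e he' w hw.1).2.1 rfl
        · exact hd e he' f hf' hef w hw
      · rw [Finset.card_insert_of_notMem hnotmem, hcard]
      · push_neg
        exact ⟨s(u, v), Finset.mem_insert_self _ _, by simp⟩
    · rintro ⟨v, m⟩ hx ⟨v', m'⟩ hx' heq
      simp only [Finset.mem_sigma, Finset.mem_filter, Finset.mem_erase, mem_mset, IsM] at hx hx'
      obtain ⟨-, ⟨-, hA, -⟩, -⟩ := hx
      obtain ⟨-, ⟨-, hA', -⟩, -⟩ := hx'
      have hnm : s(u, v) ∉ m := fun hmem => by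
        have := hA _ hmem u (by simp); simp at this
      have hnm' : s(u, v') ∉ m' := fun hmem => by
        have := hA' _ hmem u (by simp); simp at this
      have hvv : v = v' := by
        have : s(u, v') ∈ insert s(u, v) m := by
          rw [heq]; exact Finset.mem_insert_self _ _
        rcases Finset.mem_insert.1 this with h | h
        · exact (Sym2.congr_right.1 h.symm)
        · exfalso
          have := hA _ h u (by simp); simp at this
      subst hvv
      have hmm : m = m' := by
        have := congrArg (fun t => Finset.erase t s(u, v)) heq
        simpa [Finset.erase_insert hnm, Finset.erase_insert hnm'] using this
      simp [hmm]
    · intro b hb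
      simp only [Finset.mem_filter, mem_mset, IsM] at hb
      obtain ⟨⟨⟨hE, hA, hd⟩, hcard⟩, hex⟩ := hb
      push_neg at hex
      obtain ⟨e, he, hue⟩ := hex
      obtain ⟨a, b', hab, rfl, hadj⟩ := edge_two G (hE he)
      -- normalize so that e = s(u, v)
      obtain ⟨v, hev, hadj'⟩ : ∃ v, s(a, b') = s(u, v) ∧ G.Adj u v := by
        rcases Sym2.mem_iff.1 hue with rfl | rfl
        · exact ⟨b', rfl, hadj⟩
        · exact ⟨a, Sym2.eq_swap, hadj.symm⟩
      rw [hev] at he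
      refine ⟨⟨v, b.erase s(u, v)⟩, ?_, ?_⟩
      · simp only [Finset.mem_sigma, Finset.mem_filter, Finset.mem_erase, mem_mset, IsM]
        have hvA : v ∈ A := hA _ he v (by simp)
        have hvu : v ≠ u := hadj'.ne'
        refine ⟨⟨⟨hvu, hvA⟩, hadj'⟩, ⟨?_, ?_, ?_⟩, ?_⟩
        · intro f hf
          exact hE (Finset.mem_of_mem_erase hf)
        · intro f hf w hw
          have hfb : f ∈ b := hf.2
          have hfe : f ≠ s(u, v) := hf.1
          have hwA := hA f hfb w hw
          have hwu : w ≠ u := fun h =>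
            hd f hfb s(u, v) he hfe w ⟨hw, h ▸ Sym2.mem_mk_left u v⟩
          have hwv : w ≠ v := fun h =>
            hd f hfb s(u, v) he hfe w ⟨hw, h ▸ Sym2.mem_mk_right u v⟩
          exact ⟨hwv, hwu, hwA⟩
        · intro f hf g hg hfg w hw
          exact hd f hf.2 g hg.2 hfg w hw
        · rw [Finset.card_erase_of_mem he, hcard]
          omega
      · exact Finset.insert_erase he
  rw [pm, ← hsplit, h1, ← h2, Finset.card_sigma]
  rfl
lemma subgraph_edge_mem {M : G.Subgraph} {e : Sym2 V} (he : e ∈ M.edgeSet) {v : V}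
    (hv : v ∈ e) : ∃ w, e = s(v, w) ∧ M.Adj v w := by
  induction e with
  | _ a b =>
    have hadj : M.Adj a b := (SimpleGraph.Subgraph.mem_edgeSet).1 he
    rcases Sym2.mem_iff.1 hv with rfl | rfl
    · exact ⟨b, rfl, hadj⟩
    · exact ⟨a, Sym2.eq_swap, hadj.symm⟩

lemma pm_matching {M : G.Subgraph} (hM : M.IsPerfectMatching) {n : ℕ}
    (hV : Fintype.card V = 2 * n) :
    M.edgeSet.toFinset ∈ mset G univ n ∧ M.edgeSet.ncard = n := by
  classical
  set s := M.edgeSet.toFinset with hs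
  have hmem : ∀ {e}, e ∈ s → e ∈ M.edgeSet := fun he => by
    rwa [hs, Set.mem_toFinset] at he
  have hcond : IsM G univ s := by
    refine ⟨?_, fun _ _ _ _ => Finset.mem_univ _, ?_⟩
    · intro e he
      exact M.edgeSet_subset (hmem (by exact_mod_cast he))
    · rintro e he f hf hef v ⟨hve, hvf⟩
      obtain ⟨w, rfl, hw⟩ := subgraph_edge_mem G (hmem he) hve
      obtain ⟨w', rfl, hw'⟩ := subgraph_edge_mem G (hmem hf) hvf
      obtain ⟨x, -, hx⟩ := hM.1 (hM.2 v)
      exact hef (by rw [hx w hw, hx w' hw'])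
  have hmem' : s ∈ mset G univ s.card := (mem_mset G).2 ⟨hcond, rfl⟩
  have hcov : cov s = univ := by
    ext v
    simp only [Finset.mem_univ, iff_true, mem_cov]
    obtain ⟨w, hw, -⟩ := hM.1 (hM.2 v)
    exact ⟨s(v, w), by rw [hs, Set.mem_toFinset]; exact hw, Sym2.mem_mk_left _ _⟩
  have h2 : s.card = n := by
    have h3 := cov_card G hmem'
    rw [hcov, Finset.card_univ, hV] at h3
    omega
  rw [h2] at hmem'
  exact ⟨hmem', by rw [Set.ncard_eq_toFinset_card', ← hs, h2]⟩

lemma pm_pos {M : G.Subgraph} (hM : M.IsPerfectMatching) {n : ℕ}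
    (hV : Fintype.card V = 2 * n) : 0 < pm G univ n :=
  Finset.card_pos.2 ⟨_, (pm_matching G hM hV).1⟩

lemma mset_erase {n : ℕ} {s : Finset (Sym2 V)} {e : Sym2 V}
    (hs : s ∈ mset G univ n) (he : e ∈ s) : s.erase e ∈ mset G univ (n - 1) := by
  obtain ⟨⟨hE, hA, hd⟩, hcard⟩ := (mem_mset G).1 hs
  refine (mem_mset G).2 ⟨⟨?_, fun _ _ _ _ => Finset.mem_univ _, ?_⟩, ?_⟩
  · intro f hf
    exact hE (Finset.mem_coe.1 (Finset.mem_of_mem_erase (Finset.mem_coe.2 hf)))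
  · intro f hf g hg hfg w hw
    exact hd f (Finset.mem_of_mem_erase hf) g (Finset.mem_of_mem_erase hg) hfg w hw
  · rw [Finset.card_erase_of_mem he, hcard]

lemma mset_pair {n : ℕ} (hV : Fintype.card V = 2 * n) {s : Finset (Sym2 V)} {a b : V}
    (hs : s ∈ mset G univ n) (he : s(a, b) ∈ s) :
    ({a, b} : Finset V) = univ \ cov (s.erase s(a, b)) := by
  obtain ⟨⟨hE, hA, hd⟩, hcard⟩ := (mem_mset G).1 hs
  have hab : a ≠ b := (G.mem_edgeSet.1 (hE he)).ne
  have hsub : ({a, b} : Finset V) ⊆ univ \ cov (s.erase s(a, b)) := by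
    intro w hw
    rw [Finset.mem_sdiff]
    refine ⟨Finset.mem_univ _, fun hcovw => ?_⟩
    obtain ⟨g, hg, hwg⟩ := (mem_cov).1 hcovw
    refine hd g (Finset.mem_of_mem_erase hg) _ he (Finset.ne_of_mem_erase hg) w ⟨hwg, ?_⟩
    rcases Finset.mem_insert.1 hw with rfl | hw'
    · exact Sym2.mem_mk_left _ _
    · rw [Finset.mem_singleton.1 hw']
      exact Sym2.mem_mk_right _ _
  have hucard : (univ \ cov (s.erase s(a, b))).card = 2 := by
    have h1 := cov_card G (mset_erase G hs he)
    have h2 := Finset.card_sdiff_of_subset (Finset.subset_univ (cov (s.erase s(a, b))))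
    rw [h1, Finset.card_univ, hV] at h2
    have hn : 1 ≤ n := by
      rcases Nat.eq_zero_or_pos n with rfl | h
      · rw [Finset.card_eq_zero.1 hcard] at he
        simp at he
      · exact h
    rw [h2]
    omega
  apply Finset.eq_of_subset_of_card_le hsub
  rw [hucard, Finset.card_insert_of_notMem (by simp [hab]), Finset.card_singleton]

lemma pm_pred {n : ℕ} (hV : Fintype.card V = 2 * n) :
    n * pm G univ n ≤ pm G univ (n - 1) := by
  classical
  rcases Nat.eq_zero_or_pos n with rfl | hn
  · simp
  have hcardn : ∀ s ∈ mset G univ n, s.card = n := fun s hs => ((mem_mset G).1 hs).2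
  have hkey : ((mset G univ n).sigma (fun s => s)).card ≤ (mset G univ (n-1)).card := by
    apply Finset.card_le_card_of_injOn (fun x => x.1.erase x.2)
    · rintro ⟨s, e⟩ hx
      simp only [Finset.coe_sigma, Set.mem_sigma_iff, Finset.mem_coe, Finset.mem_sigma] at hx
      exact mset_erase G hx.1 hx.2
    · rintro ⟨s, e⟩ hx ⟨t, f⟩ hy heq
      simp only [Finset.coe_sigma, Set.mem_sigma_iff, Finset.mem_coe] at hx hy
      obtain ⟨hs, he⟩ := hx
      obtain ⟨ht, hf⟩ := hy
      simp only at heq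
      obtain ⟨⟨hE, -, -⟩, -⟩ := (mem_mset G).1 hs
      obtain ⟨⟨hE', -, -⟩, -⟩ := (mem_mset G).1 ht
      obtain ⟨a, b, hab, heab, -⟩ := edge_two G (hE he)
      obtain ⟨c, d, hcd, hfcd, -⟩ := edge_two G (hE' hf)
      have hp1 := mset_pair G hV hs (heab ▸ he)
      have hp2 := mset_pair G hV ht (hfcd ▸ hf)
      rw [← heab] at hp1
      rw [← hfcd, ← heq] at hp2
      have hpp : ({a, b} : Finset V) = {c, d} := by rw [hp1, hp2]
      have hef : e = f := by
        have hc : c ∈ ({a, b} : Finset V) := by rw [hpp]; simp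
        have hd' : d ∈ ({a, b} : Finset V) := by rw [hpp]; simp
        simp only [Finset.mem_insert, Finset.mem_singleton] at hc hd'
        rw [heab, hfcd, Sym2.eq_iff]
        rcases hc with rfl | rfl <;> rcases hd' with rfl | rfl <;> tauto
      have hst : s = t := by
        rw [← Finset.insert_erase he, heq, hef, Finset.insert_erase hf]
      subst hst; subst hef; rfl
  rw [Finset.card_sigma] at hkey
  calc n * pm G univ n = ∑ s ∈ mset G univ n, s.card := by
        rw [Finset.sum_congr rfl hcardn, Finset.sum_const, smul_eq_mul, mul_comm]
        rfl
    _ ≤ pm G univ (n - 1) := hkey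

lemma pm_one : pm G univ 1 = G.edgeSet.ncard := by
  classical
  have himg : mset G univ 1 = G.edgeFinset.image (fun e => {e}) := by
    ext s
    simp only [mem_mset, IsM, Finset.mem_image, Finset.card_eq_one]
    constructor
    · rintro ⟨⟨hE, -, -⟩, e, rfl⟩
      exact ⟨e, by simpa [SimpleGraph.mem_edgeFinset] using hE (Finset.mem_singleton_self e), rfl⟩
    · rintro ⟨e, he, rfl⟩
      refine ⟨⟨?_, fun _ _ _ _ => Finset.mem_univ _, ?_⟩, e, rfl⟩
      · intro f hf
        rw [Finset.mem_coe, Finset.mem_singleton] at hf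
        subst hf
        exact (SimpleGraph.mem_edgeFinset).1 he
      · intro f hf g hg hfg
        rw [Finset.mem_singleton] at hf hg
        exact absurd (hf.trans hg.symm) hfg
  rw [pm, himg, Finset.card_image_of_injective _ (fun a b h => by
    simpa using h), SimpleGraph.edgeFinset, Set.ncard_eq_toFinset_card']
/-- The matching "polynomial" of the induced graph on `A`, as a function on `ℂ`,
with integer exponents. -/
noncomputable def mC (A : Finset V) (x : ℂ) : ℂ :=
  ∑ r ∈ Finset.range (A.card + 1),
    (-1 : ℂ) ^ r * (pm G A r : ℂ) * x ^ ((A.card : ℤ) - 2 * r)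

lemma mC_eq_range {A : Finset V} {N : ℕ} (hN : A.card + 1 ≤ N) (x : ℂ) :
    mC G A x = ∑ r ∈ Finset.range N,
      (-1 : ℂ) ^ r * (pm G A r : ℂ) * x ^ ((A.card : ℤ) - 2 * r) := by
  rw [mC]
  apply Finset.sum_subset (Finset.range_subset_range.2 hN)
  intro r hr hr'
  have h2 : A.card < 2 * r := by
    simp only [Finset.mem_range, not_lt] at hr'
    omega
  rw [pm_eq_zero G h2]
  simp

lemma mC_empty (x : ℂ) : mC G ∅ x = 1 := by
  simp [mC, pm_zero]

lemma mC_rec {A : Finset V} {u : V} (hu : u ∈ A) {x : ℂ} (hx : x ≠ 0) :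
    mC G A x = x * mC G (A.erase u) x -
      ∑ v ∈ (A.erase u).filter (G.Adj u), mC G ((A.erase u).erase v) x := by
  classical
  set A' := A.erase u with hA'def
  have hA' : A'.card + 1 = A.card := Finset.card_erase_add_one hu
  have hxA : x * mC G A' x
      = ∑ r ∈ Finset.range (A.card + 1),
          (-1:ℂ)^r * (pm G A' r : ℂ) * x ^ ((A.card:ℤ) - 2*r) := by
    rw [mC_eq_range G (N := A.card + 1) (by omega) x, Finset.mul_sum]
    refine Finset.sum_congr rfl fun r hr => ?_
    have he : (A.card:ℤ) - 2*r = ((A'.card:ℤ) - 2*r) + 1 := by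
      rw [← hA']; push_cast; ring
    rw [he, zpow_add_one₀ hx]
    ring
  have hAv : ∀ v ∈ A'.filter (G.Adj u), mC G (A'.erase v) x
      = ∑ r ∈ Finset.range A.card, (-1:ℂ)^r * (pm G (A'.erase v) r : ℂ)
          * x ^ ((A.card:ℤ) - 2*((r:ℤ)+1)) := by
    intro v hv
    have hv' : v ∈ A' := (Finset.mem_filter.1 hv).1
    have hcv : (A'.erase v).card + 1 = A'.card := Finset.card_erase_add_one hv'
    rw [mC_eq_range G (N := A.card) (by omega) x]
    refine Finset.sum_congr rfl fun r hr => ?_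
    congr 2
    push_cast
    omega
  have hmain : ∀ r : ℕ, ((pm G A (r+1) : ℂ))
      = (pm G A' (r+1) : ℂ) + ∑ v ∈ A'.filter (G.Adj u), (pm G (A'.erase v) r : ℂ) := by
    intro r
    exact_mod_cast congrArg (Nat.cast : ℕ → ℂ) (pm_succ G hu r)
  have hS : ∑ v ∈ A'.filter (G.Adj u), mC G (A'.erase v) x
      = ∑ r ∈ Finset.range A.card, ∑ v ∈ A'.filter (G.Adj u),
          (-1:ℂ)^r * (pm G (A'.erase v) r : ℂ) * x ^ ((A.card:ℤ) - 2*((r:ℤ)+1)) := by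
    have h1 : ∑ v ∈ A'.filter (G.Adj u), mC G (A'.erase v) x
        = ∑ v ∈ A'.filter (G.Adj u), ∑ r ∈ Finset.range A.card,
            (-1:ℂ)^r * (pm G (A'.erase v) r : ℂ) * x ^ ((A.card:ℤ) - 2*((r:ℤ)+1)) :=
      Finset.sum_congr rfl hAv
    rw [h1, Finset.sum_comm]
  rw [hxA, mC, Finset.sum_range_succ', Finset.sum_range_succ', hS]
  simp only [pm_zero]
  have hterm : ∀ r ∈ Finset.range A.card,
      (-1:ℂ)^(r+1) * (pm G A (r+1) : ℂ) * x ^ ((A.card:ℤ) - 2*(r+1 : ℕ))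
      = (-1:ℂ)^(r+1) * (pm G A' (r+1) : ℂ) * x ^ ((A.card:ℤ) - 2*(r+1 : ℕ))
        - ∑ v ∈ A'.filter (G.Adj u),
          (-1:ℂ)^r * (pm G (A'.erase v) r : ℂ) * x ^ ((A.card:ℤ) - 2*((r:ℤ)+1)) := by
    intro r hr
    have hE : (A.card:ℤ) - 2*((r+1 : ℕ):ℤ) = (A.card:ℤ) - 2*((r:ℤ)+1) := by
      push_cast; ring
    rw [hmain r]
    rw [show ((-1:ℂ)^r) = ((-1:ℂ)^r) from rfl]
    conv_rhs => rw [← hE]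
    rw [← Finset.sum_mul, ← Finset.mul_sum]
    ring
  have hsum := Finset.sum_congr rfl hterm
  rw [Finset.sum_sub_distrib] at hsum
  linear_combination hsum

lemma mC_ne_zero : ∀ (k : ℕ) (A : Finset V), A.card ≤ k → ∀ x : ℂ, 0 < x.im →
    mC G A x ≠ 0 ∧ ∀ u ∈ A, 0 < (mC G A x / mC G (A.erase u) x).im := by
  intro k
  induction k with
  | zero =>
    intro A hA x hx
    rw [Finset.card_eq_zero.1 (Nat.le_zero.1 hA)]
    exact ⟨by rw [mC_empty]; exact one_ne_zero, by simp⟩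
  | succ k ih =>
    intro A hA x hx
    rcases Nat.lt_or_ge A.card (k+1) with h | h
    · exact ih A (by omega) x hx
    have hAcard : A.card = k + 1 := le_antisymm hA h
    have hx0 : x ≠ 0 := fun h0 => by rw [h0] at hx; simp at hx
    have part2 : ∀ u ∈ A, 0 < (mC G A x / mC G (A.erase u) x).im := by
      intro u hu
      have hA'le : (A.erase u).card ≤ k := by
        rw [Finset.card_erase_of_mem hu, hAcard]
        omega
      have ihA' := ih (A.erase u) hA'le x hx
      have hden : mC G (A.erase u) x ≠ 0 := ihA'.1
      have hratio : mC G A x / mC G (A.erase u) x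
          = x - ∑ v ∈ (A.erase u).filter (G.Adj u),
              mC G ((A.erase u).erase v) x / mC G (A.erase u) x := by
        rw [mC_rec G hu hx0, sub_div, mul_div_cancel_right₀ _ hden, Finset.sum_div]
      rw [hratio, Complex.sub_im]
      have hsum : (∑ v ∈ (A.erase u).filter (G.Adj u),
          mC G ((A.erase u).erase v) x / mC G (A.erase u) x).im ≤ 0 := by
        rw [Complex.im_sum]
        apply Finset.sum_nonpos
        intro v hv
        have h2 := ihA'.2 v (Finset.mem_filter.1 hv).1
        rw [← inv_div, Complex.inv_im]
        apply div_nonpos_of_nonpos_of_nonneg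
        · linarith
        · exact Complex.normSq_nonneg _
      linarith
    have hApos : A.Nonempty := Finset.card_pos.1 (by omega)
    obtain ⟨u, hu⟩ := hApos
    refine ⟨?_, part2⟩
    have h2 := part2 u hu
    intro hz
    rw [hz, zero_div] at h2
    simp at h2

/-- the polynomial in `t = x²` -/
noncomputable def FF (n : ℕ) : Polynomial ℝ :=
  ∑ r ∈ Finset.range (n + 1),
    Polynomial.C ((-1:ℝ)^r * (pm G univ r : ℝ)) * Polynomial.X ^ (n - r)

lemma matchPoly_eq_comp {n : ℕ} (hV : Fintype.card V = 2 * n) :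
    matchPoly G = (FF G n).comp (Polynomial.X ^ 2) := by
  rw [matchPoly, FF, ← Polynomial.coe_compRingHom_apply, map_sum]
  rw [hV, show 2 * n / 2 + 1 = n + 1 from by omega]
  refine Finset.sum_congr rfl fun r hr => ?_
  simp only [Polynomial.coe_compRingHom_apply, Polynomial.mul_comp, Polynomial.C_comp,
    Polynomial.pow_comp, Polynomial.X_comp, matchCount_eq]
  rw [← pow_mul]
  congr 2
  simp only [Finset.mem_range] at hr
  omega

lemma FF_coeff {n k : ℕ} (hk : k ≤ n) :
    (FF G n).coeff (n - k) = (-1:ℝ)^k * (pm G univ k : ℝ) := by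
  rw [FF, Polynomial.finset_sum_coeff]
  rw [Finset.sum_eq_single k]
  · rw [Polynomial.coeff_C_mul, Polynomial.coeff_X_pow, if_pos rfl, mul_one]
  · intro r hr hrk
    rw [Polynomial.coeff_C_mul, Polynomial.coeff_X_pow, if_neg, mul_zero]
    simp only [Finset.mem_range] at hr
    omega
  · intro hk'
    simp only [Finset.mem_range] at hk'
    omega

lemma FF_natDegree_le (n : ℕ) : (FF G n).natDegree ≤ n := by
  refine (Polynomial.natDegree_sum_le _ _).trans ?_
  rw [Finset.fold_max_le]
  refine ⟨Nat.zero_le _, fun r hr => ?_⟩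
  exact (Polynomial.natDegree_C_mul_X_pow_le _ _).trans (Nat.sub_le _ _)

lemma FF_monic (n : ℕ) : (FF G n).Monic := by
  apply Polynomial.monic_of_natDegree_le_of_coeff_eq_one n (FF_natDegree_le G n)
  have := FF_coeff G (Nat.zero_le n)
  rw [Nat.sub_zero] at this
  rw [this, pow_zero, pm_zero, one_mul, Nat.cast_one]

lemma FF_natDegree (n : ℕ) : (FF G n).natDegree = n := by
  refine le_antisymm (FF_natDegree_le G n) ?_
  apply Polynomial.le_natDegree_of_ne_zero
  have h := FF_coeff G (Nat.zero_le n)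
  rw [Nat.sub_zero] at h
  rw [h, pow_zero, pm_zero, one_mul, Nat.cast_one]
  exact one_ne_zero

lemma eval_matchPoly {n : ℕ} (hV : Fintype.card V = 2 * n) (x : ℂ) :
    Polynomial.eval x ((matchPoly G).map (algebraMap ℝ ℂ)) =
      ∑ r ∈ Finset.range (n + 1), (-1:ℂ)^r * (pm G univ r : ℂ) * x ^ (2*n - 2*r) := by
  rw [matchPoly, hV, show 2*n/2+1 = n+1 from by omega,
    ← Polynomial.coe_mapRingHom, map_sum, Polynomial.eval_finset_sum]
  refine Finset.sum_congr rfl fun r hr => ?_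
  simp only [Polynomial.coe_mapRingHom, Polynomial.map_mul, Polynomial.map_C,
    Polynomial.map_pow, Polynomial.map_X, Polynomial.eval_mul, Polynomial.eval_C,
    Polynomial.eval_pow, Polynomial.eval_X, matchCount_eq, Complex.coe_algebraMap]
  push_cast
  ring

lemma mC_univ_eq {n : ℕ} (hV : Fintype.card V = 2 * n) {x : ℂ} (hx : x ≠ 0) :
    mC G univ x = Polynomial.eval x ((matchPoly G).map (algebraMap ℝ ℂ)) := by
  have hcu : (univ : Finset V).card = 2 * n := by rw [Finset.card_univ, hV]
  rw [eval_matchPoly G hV x, mC_eq_range G (N := 2*n+1) (by rw [hcu]) x]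
  simp only [hcu]
  rw [← Finset.sum_subset (Finset.range_subset_range.2 (show n+1 ≤ 2*n+1 by omega)) ?hz]
  case hz =>
    intro r hr hr'
    have h2 : (univ : Finset V).card < 2*r := by
      simp only [Finset.mem_range, not_lt] at hr'
      omega
    rw [pm_eq_zero G h2]
    simp
  refine Finset.sum_congr rfl fun r hr => ?_
  simp only [Finset.mem_range] at hr
  rw [show ((2*n : ℕ):ℤ) - 2*(r:ℤ) = ((2*n - 2*r : ℕ):ℤ) from by omega, zpow_natCast]

lemma root_im_zero {n : ℕ} (hV : Fintype.card V = 2 * n) {z : ℂ}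
    (hz : Polynomial.eval z ((matchPoly G).map (algebraMap ℝ ℂ)) = 0) : z.im = 0 := by
  by_contra him
  have key : ∀ w : ℂ, 0 < w.im → Polynomial.eval w ((matchPoly G).map (algebraMap ℝ ℂ)) ≠ 0 := by
    intro w hw
    have hw0 : w ≠ 0 := fun h => by rw [h] at hw; simp at hw
    rw [← mC_univ_eq G hV hw0]
    exact (mC_ne_zero G (univ : Finset V).card univ le_rfl w hw).1
  have haev : ∀ w : ℂ, Polynomial.eval w ((matchPoly G).map (algebraMap ℝ ℂ))
      = Polynomial.aeval w (matchPoly G) := by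
    intro w
    rw [Polynomial.aeval_def, Polynomial.eval_map]
  rcases lt_or_gt_of_ne him with hlt | hgt
  · apply key ((starRingEnd ℂ) z) (by rw [Complex.conj_im]; linarith)
    rw [haev, Polynomial.aeval_conj, ← haev, hz, map_zero]
  · exact key z hgt hz

lemma FF_root_real_ge_one {n : ℕ} (hV : Fintype.card V = 2 * n)
    (hpn : 0 < pm G univ n)
    (hroot : ∀ x : ℝ, 0 < x → x < 1 → ¬ (matchPoly G).IsRoot x)
    {τ : ℂ} (hτ : τ ∈ ((FF G n).map (algebraMap ℝ ℂ)).roots) :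
    ∃ t : ℝ, τ = (t:ℂ) ∧ 1 ≤ t := by
  have hτroot : Polynomial.eval τ ((FF G n).map (algebraMap ℝ ℂ)) = 0 :=
    Polynomial.isRoot_of_mem_roots hτ
  obtain ⟨x, hx2⟩ : ∃ x : ℂ, x ^ 2 = τ := IsAlgClosed.exists_pow_nat_eq τ two_pos
  have hxroot : Polynomial.eval x ((matchPoly G).map (algebraMap ℝ ℂ)) = 0 := by
    rw [matchPoly_eq_comp G hV, Polynomial.map_comp, Polynomial.eval_comp,
      Polynomial.map_pow, Polynomial.map_X, Polynomial.eval_pow, Polynomial.eval_X, hx2, hτroot]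
  have hxim : x.im = 0 := root_im_zero G hV hxroot
  have hxre : x = ((x.re : ℝ) : ℂ) := Complex.ext rfl (by simp [hxim])
  -- F(t) = 0 over ℝ for t = x.re ^ 2
  set t : ℝ := x.re ^ 2 with ht
  have hτt : τ = (t : ℂ) := by
    rw [← hx2, hxre, ht]
    norm_cast
  have hFt : (FF G n).eval t = 0 := by
    have h5 : Polynomial.eval ((t : ℝ) : ℂ) ((FF G n).map (algebraMap ℝ ℂ))
        = algebraMap ℝ ℂ ((FF G n).eval t) := by
      rw [Polynomial.eval_map, show ((t : ℝ) : ℂ) = algebraMap ℝ ℂ t from rfl]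
      exact Polynomial.eval₂_at_apply (algebraMap ℝ ℂ) t
    rw [← hτt, hτroot] at h5
    have h6 := h5.symm
    rwa [Complex.coe_algebraMap, Complex.ofReal_eq_zero] at h6
  -- x ≠ 0
  have hx0 : x ≠ 0 := by
    intro h0
    rw [h0] at hx2
    have hτ0 : τ = 0 := by rw [← hx2]; ring
    -- then F(0) = 0, but F(0) = ±p_n ≠ 0
    rw [hτ0] at hτroot
    have hc : (FF G n).coeff 0 = (-1:ℝ)^n * (pm G univ n : ℝ) := by
      have := FF_coeff G (le_refl n)
      rwa [Nat.sub_self] at this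
    rw [← Polynomial.coeff_zero_eq_eval_zero, Polynomial.coeff_map, hc,
      Complex.coe_algebraMap, Complex.ofReal_eq_zero] at hτroot
    have h1 : ((pm G univ n : ℝ)) = 0 := by
      rcases mul_eq_zero.1 hτroot with h | h
      · exact absurd h (pow_ne_zero _ (by norm_num))
      · exact h
    rw [Nat.cast_eq_zero] at h1
    omega
  refine ⟨t, hτt, ?_⟩
  by_contra hlt
  push_neg at hlt
  have htpos : 0 < t := by
    have hre : x.re ≠ 0 := fun h => hx0 (by rw [hxre, h]; simp)
    positivity
  have hy : 0 < |x.re| ∧ |x.re| < 1 := by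
    constructor
    · have hre : x.re ≠ 0 := fun h => hx0 (by rw [hxre, h]; simp)
      exact abs_pos.2 hre
    · nlinarith [abs_nonneg x.re, sq_abs x.re]
  apply hroot |x.re| hy.1 hy.2
  have habs : |x.re| ^ 2 = t := by rw [sq_abs, ht]
  rw [Polynomial.IsRoot, matchPoly_eq_comp G hV, Polynomial.eval_comp,
    Polynomial.eval_pow, Polynomial.eval_X, habs, hFt]

section MultisetLemmas

lemma esymm_map_hom {R S : Type*} [CommSemiring R] [CommSemiring S] (f : R →+* S)
    (s : Multiset R) (k : ℕ) : (s.map f).esymm k = f (s.esymm k) := by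
  rw [Multiset.esymm, Multiset.esymm, Multiset.powersetCard_map, Multiset.map_map,
    map_multiset_sum, Multiset.map_map]
  congr 1
  apply Multiset.map_congr rfl
  intro t ht
  simp only [Function.comp_apply]
  exact (map_multiset_prod f t).symm

lemma esymm_one' {R : Type*} [CommSemiring R] (s : Multiset R) : s.esymm 1 = s.sum := by
  rw [Multiset.esymm, Multiset.powersetCard_one, Multiset.map_map]
  simp [Function.comp_def]

lemma esymm_card_eq_prod {R : Type*} [CommSemiring R] (s : Multiset R) :
    s.esymm (Multiset.card s) = s.prod := by
  have h : s.powersetCard (Multiset.card s) = {s} := by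
    have hmem : s ∈ s.powersetCard (Multiset.card s) :=
      Multiset.mem_powersetCard.2 ⟨le_refl s, rfl⟩
    have hcard : Multiset.card (s.powersetCard (Multiset.card s)) = 1 := by
      rw [Multiset.card_powersetCard, Nat.choose_self]
    obtain ⟨a, ha⟩ := Multiset.card_eq_one.1 hcard
    rw [ha] at hmem ⊢
    rw [Multiset.mem_singleton.1 hmem]
  rw [Multiset.esymm, h]
  simp

lemma esymm_cons {R : Type*} [CommSemiring R] (a : R) (s : Multiset R) (k : ℕ) :
    (a ::ₘ s).esymm (k+1) = s.esymm (k+1) + a * s.esymm k := by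
  rw [Multiset.esymm, Multiset.powersetCard_cons, Multiset.map_add, Multiset.sum_add,
    Multiset.esymm, Multiset.esymm]
  congr 1
  rw [Multiset.map_map]
  have h : ∀ t ∈ Multiset.powersetCard k s,
      (Multiset.prod ∘ (Multiset.cons a)) t = a * t.prod := fun t _ => Multiset.prod_cons a t
  rw [Multiset.map_congr rfl h, ← Multiset.sum_map_mul_left]

lemma esymm_aux : ∀ (s : Multiset ℝ) (a : ℝ), (∀ τ ∈ a ::ₘ s, τ ≠ 0) →
    (a ::ₘ s).esymm (Multiset.card s) = (a ::ₘ s).prod * ((a ::ₘ s).map (·⁻¹)).sum := by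
  intro s
  induction s using Multiset.induction with
  | empty =>
    intro a h0
    have ha : a ≠ 0 := h0 a (Multiset.mem_cons_self a _)
    simp [Multiset.esymm, mul_inv_cancel₀ ha]
  | cons b s ih =>
    intro a h0
    have hb : ∀ τ ∈ b ::ₘ s, τ ≠ 0 := fun τ hτ => h0 τ (Multiset.mem_cons_of_mem hτ)
    have ha : a ≠ 0 := h0 a (Multiset.mem_cons_self a _)
    rw [Multiset.card_cons, esymm_cons, ih b hb,
      show Multiset.card s + 1 = Multiset.card (b ::ₘ s) from (Multiset.card_cons b s).symm,
      esymm_card_eq_prod]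
    have hprod : (b ::ₘ s).prod ≠ 0 :=
      Multiset.prod_ne_zero (fun h => hb 0 h rfl)
    rw [Multiset.map_cons, Multiset.sum_cons, Multiset.prod_cons (a := a)]
    field_simp
    simp only [Multiset.map_cons, Multiset.sum_cons]
    have h1 : a * (1 / a) = 1 := mul_one_div_cancel ha
    linear_combination (-1 : ℝ) * h1
  
lemma all_eq_one : ∀ (s : Multiset ℝ), (∀ a ∈ s, a ≤ 1) →
    ((Multiset.card s : ℝ) ≤ s.sum) → ∀ a ∈ s, a = 1 := by
  intro s
  induction s using Multiset.induction with
  | empty => simp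
  | cons b s ih =>
    intro h1 hsum a ha
    have hb : b ≤ 1 := h1 b (Multiset.mem_cons_self b s)
    have hs1 : ∀ a ∈ s, a ≤ 1 := fun a ha => h1 a (Multiset.mem_cons_of_mem ha)
    have hsle : s.sum ≤ (Multiset.card s : ℝ) := by
      have := Multiset.sum_le_card_nsmul s 1 hs1
      simpa using this
    rw [Multiset.card_cons, Multiset.sum_cons] at hsum
    push_cast at hsum
    have hb1 : b = 1 := by linarith
    rcases Multiset.mem_cons.1 ha with rfl | ha'
    · exact hb1
    · exact ih hs1 (by linarith) a ha'

end MultisetLemmas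

end MP

theorem stmt_14 {V : Type*} [Fintype V] [DecidableEq V] (G : SimpleGraph V)
    (n : ℕ) (hV : Fintype.card V = 2 * n)
    (hpm : ∃ M : G.Subgraph, M.IsPerfectMatching)
    (hroot : ∀ x : ℝ, 0 < x → x < 1 → ¬ (matchPoly G).IsRoot x) :
    G.edgeSet.ncard = n ∧ ∀ v : V, ∃! w : V, G.Adj v w := by
  classical
  obtain ⟨M, hM⟩ := hpm
  have hedge : G.edgeSet.ncard = n := by
    rcases Nat.eq_zero_or_pos n with rfl | hn
    · have hempty : IsEmpty V := Fintype.card_eq_zero_iff.1 (by omega)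
      have h0 : G.edgeSet = ∅ := by
        ext e
        simp only [Set.mem_empty_iff_false, iff_false]
        intro he
        obtain ⟨a, b, -, -, -⟩ := MP.edge_two G he
        exact hempty.elim a
      rw [h0]
      simp
    · have hpn : 0 < MP.pm G Finset.univ n := MP.pm_pos G hM hV
      set P := ((MP.FF G n).map (algebraMap ℝ ℂ)) with hP
      have hPmonic : P.Monic := (MP.FF_monic G n).map _
      have hPdeg : P.natDegree = n := by
        rw [hP, (MP.FF_monic G n).natDegree_map, MP.FF_natDegree]
      have hcardroots : Multiset.card P.roots = n := by
        rw [← hPdeg]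
        exact (Polynomial.splits_iff_card_roots).1 (IsAlgClosed.splits P)
      set T' : Multiset ℝ := P.roots.map Complex.re with hT'
      have hT'card : Multiset.card T' = n := by rw [hT', Multiset.card_map, hcardroots]
      have hge1 : ∀ t ∈ T', 1 ≤ t := by
        intro t ht
        rw [hT', Multiset.mem_map] at ht
        obtain ⟨τ, hτ, rfl⟩ := ht
        obtain ⟨t', h1, h2⟩ := MP.FF_root_real_ge_one G hV hpn hroot hτ
        rw [h1]
        simpa using h2
      have hmapback : T'.map (fun t => algebraMap ℝ ℂ t) = P.roots := by
        rw [hT', Multiset.map_map]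
        have hcg : P.roots.map ((fun t => algebraMap ℝ ℂ t) ∘ Complex.re)
            = P.roots.map id := by
          apply Multiset.map_congr rfl
          intro τ hτ
          obtain ⟨t', h1, -⟩ := MP.FF_root_real_ge_one G hV hpn hroot hτ
          simp only [Function.comp_apply, id, Complex.coe_algebraMap]
          rw [h1]
          norm_num
        rw [hcg, Multiset.map_id]
      have hesymm : ∀ j, j ≤ n → T'.esymm j = (MP.pm G Finset.univ j : ℝ) := by
        intro j hj
        have hk : n - j ≤ P.natDegree := by rw [hPdeg]; omega
        have hco := Polynomial.coeff_eq_esymm_roots_of_splits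
          (IsAlgClosed.splits P) hk
        rw [hPmonic.leadingCoeff, one_mul, hPdeg, show n - (n - j) = j from by omega] at hco
        have hcoeff : P.coeff (n - j) = algebraMap ℝ ℂ ((-1:ℝ)^j * (MP.pm G Finset.univ j : ℝ)) := by
          rw [hP, Polynomial.coeff_map, MP.FF_coeff G hj]
        have hesC : P.roots.esymm j = algebraMap ℝ ℂ (T'.esymm j) := by
          rw [← hmapback]
          exact MP.esymm_map_hom (algebraMap ℝ ℂ) T' j
        rw [hcoeff, hesC] at hco
        simp only [Complex.coe_algebraMap] at hco
        have hreal : ((-1:ℝ))^j * (MP.pm G Finset.univ j : ℝ) = (-1:ℝ)^j * T'.esymm j := by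
          exact_mod_cast hco
        exact (mul_left_cancel₀ (pow_ne_zero j (by norm_num : (-1:ℝ) ≠ 0)) hreal).symm
      have hprod : T'.prod = (MP.pm G Finset.univ n : ℝ) := by
        have h := MP.esymm_card_eq_prod T'
        rw [hT'card] at h
        rw [← h]
        exact hesymm n le_rfl
      have hsum : T'.sum = (MP.pm G Finset.univ 1 : ℝ) := by
        rw [← MP.esymm_one' T']
        exact hesymm 1 hn
      have hne0 : ∀ τ ∈ T', τ ≠ 0 := fun τ hτ => by
        have := hge1 τ hτ; intro h; rw [h] at this; linarith
      obtain ⟨a, s, hT's⟩ : ∃ a s, T' = a ::ₘ s := by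
        obtain ⟨a, ha⟩ := Multiset.card_pos_iff_exists_mem.1
          (show 0 < Multiset.card T' by omega)
        obtain ⟨s, hs⟩ := Multiset.exists_cons_of_mem ha
        exact ⟨a, s, hs⟩
      have hid : T'.esymm (n - 1) = T'.prod * (T'.map (·⁻¹)).sum := by
        have hc : Multiset.card s = n - 1 := by
          have h := hT'card
          rw [hT's, Multiset.card_cons] at h
          omega
        rw [hT's, ← hc]
        exact MP.esymm_aux s a (by rw [← hT's]; exact hne0)
      have hSinv_ge : (n : ℝ) ≤ (T'.map (·⁻¹)).sum := by
        have hineq := MP.pm_pred G hV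
        have hR : (n : ℝ) * (MP.pm G Finset.univ n : ℝ)
            ≤ (MP.pm G Finset.univ (n-1) : ℝ) := by exact_mod_cast hineq
        have hpnR : (0:ℝ) < (MP.pm G Finset.univ n : ℝ) := by exact_mod_cast hpn
        have h1 : (MP.pm G Finset.univ (n-1) : ℝ)
            = (T'.map (·⁻¹)).sum * (MP.pm G Finset.univ n : ℝ) := by
          rw [← hesymm (n-1) (by omega), hid, hprod, mul_comm]
        rw [h1] at hR
        exact le_of_mul_le_mul_right hR hpnR
      have hinv_le : ∀ b ∈ T'.map (·⁻¹), b ≤ 1 := by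
        intro b hb
        rw [Multiset.mem_map] at hb
        obtain ⟨t, ht, rfl⟩ := hb
        exact inv_le_one_of_one_le₀ (hge1 t ht)
      have hcardinv : (Multiset.card (T'.map (·⁻¹)) : ℝ) ≤ (T'.map (·⁻¹)).sum := by
        rw [Multiset.card_map, hT'card]
        exact hSinv_ge
      have hall1 := MP.all_eq_one (T'.map (·⁻¹)) hinv_le hcardinv
      have hT'1 : ∀ t ∈ T', t = 1 := by
        intro t ht
        have h := hall1 t⁻¹ (Multiset.mem_map_of_mem _ ht)
        exact inv_eq_one.1 h
      have hT'rep : T' = Multiset.replicate n (1:ℝ) :=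
        Multiset.eq_replicate.2 ⟨hT'card, hT'1⟩
      have hsn : T'.sum = (n : ℝ) := by
        rw [hT'rep, Multiset.sum_replicate, nsmul_eq_mul, mul_one]
      have hpm1 : MP.pm G Finset.univ 1 = n := by
        have hcast : (MP.pm G Finset.univ 1 : ℝ) = (n:ℝ) := by rw [← hsum, hsn]
        exact_mod_cast hcast
      rw [← MP.pm_one G]
      exact hpm1
  refine ⟨hedge, ?_⟩
  have hMcard : M.edgeSet.ncard = n := (MP.pm_matching G hM hV).2
  have hsub : M.edgeSet ⊆ G.edgeSet := M.edgeSet_subset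
  have heq : M.edgeSet = G.edgeSet :=
    Set.eq_of_subset_of_ncard_le hsub (by rw [hedge, hMcard]) (Set.toFinite _)
  intro v
  obtain ⟨w, hw, huniq⟩ := hM.1 (hM.2 v)
  refine ⟨w, hw.adj_sub, ?_⟩
  intro y hy
  apply huniq
  have hyM : s(v, y) ∈ M.edgeSet := by
    rw [heq]
    exact hy
  exact (SimpleGraph.Subgraph.mem_edgeSet).1 hyM
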